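/- Let K be a number field and m, n ⊆ K two full lattices. Let Υ(m,n) be the subgroup of SL₂(K) generated by the matrices S = [[0,−1],[1,0]], the diagonal matrices diag(λ, λ⁻¹) for λ ∈ K^×, and the unipotent matrices [[1,μ],[0,1]] with μ·m ⊆ n. Then Υ(m,n) acts transitively on the projective line ℙ¹(K) by Möbius transformations. -/

import Mathlib

/-- `L` is a full lattice in the number field `K`. -/
def IsFullLattice (K : Type*) [Field K] [NumberField K] (L : Submodule ℤ K) : Prop :=
  L.FG ∧ Submodule.span ℚ (L : Set K) = ⊤

/-- The generators of the group `Υ(m,n) ≤ SL₂(K)`: the matrix `S = [[0,−1],[1,0]]`,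
the diagonal matrices `diag(λ, λ⁻¹)` for `λ ∈ K^×`, and the unipotent matrices
`[[1,μ],[0,1]]` with `μ·m ⊆ n`. -/
def upsilonGen (K : Type*) [Field K] (m n : Submodule ℤ K) :
    Set (Matrix.SpecialLinearGroup (Fin 2) K) :=
  {g | g.1 = !![0, -1; 1, 0] ∨
    (∃ l : K, l ≠ 0 ∧ g.1 = !![l, 0; 0, l⁻¹]) ∨
    (∃ μ : K, (∀ x ∈ m, μ * x ∈ n) ∧ g.1 = !![1, μ; 0, 1])}

namespace UpsilonAux

open Matrix

variable {K : Type*} [Field K]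

/-- The matrix `S`. -/
def Sel : Matrix.SpecialLinearGroup (Fin 2) K :=
  ⟨!![0, -1; 1, 0], by simp [Matrix.det_fin_two_of]⟩

/-- Diagonal matrices. -/
def Del (l : K) (hl : l ≠ 0) : Matrix.SpecialLinearGroup (Fin 2) K :=
  ⟨!![l, 0; 0, l⁻¹], by simp [Matrix.det_fin_two_of]; field_simp⟩

/-- Unipotent matrices. -/
def Tel (μ : K) : Matrix.SpecialLinearGroup (Fin 2) K :=
  ⟨!![1, μ; 0, 1], by simp [Matrix.det_fin_two_of]⟩

variable (m n : Submodule ℤ K)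

lemma Sel_mem : Sel ∈ Subgroup.closure (upsilonGen K m n) :=
  Subgroup.subset_closure (Or.inl rfl)

lemma Del_mem (l : K) (hl : l ≠ 0) : Del l hl ∈ Subgroup.closure (upsilonGen K m n) :=
  Subgroup.subset_closure (Or.inr (Or.inl ⟨l, hl, rfl⟩))

lemma Tel_mem (μ : K) (hμ : ∀ x ∈ m, μ * x ∈ n) :
    Tel μ ∈ Subgroup.closure (upsilonGen K m n) :=
  Subgroup.subset_closure (Or.inr (Or.inr ⟨μ, hμ, rfl⟩))

lemma Del_Tel_Del (a μ : K) (ha : a ≠ 0) (ha' : a⁻¹ ≠ 0) :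
    Del a ha * Tel μ * Del a⁻¹ ha' = Tel (a^2 * μ) := by
  apply Subtype.ext
  show (!![a, 0; 0, a⁻¹] * !![1, μ; 0, 1]) * !![a⁻¹, 0; 0, (a⁻¹)⁻¹] = !![1, a^2*μ; 0, 1]
  rw [Matrix.mul_fin_two, Matrix.mul_fin_two]
  field_simp
  simp [ha]
  ring

/-- conjugated unipotents -/
lemma Tel_sq_mem (a μ : K) (ha : a ≠ 0) (hμ : ∀ x ∈ m, μ * x ∈ n) :
    Tel (a^2 * μ) ∈ Subgroup.closure (upsilonGen K m n) := by
  rw [← Del_Tel_Del a μ ha (inv_ne_zero ha)]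
  exact mul_mem (mul_mem (Del_mem m n a ha) (Tel_mem m n μ hμ)) (Del_mem m n a⁻¹ (inv_ne_zero ha))

lemma Tel_mul (s t : K) : Tel s * Tel t = Tel (s + t) := by
  apply Subtype.ext
  show !![(1:K), s; 0, 1] * !![1, t; 0, 1] = !![1, s + t; 0, 1]
  rw [Matrix.mul_fin_two]
  norm_num
  rw [add_comm]

end UpsilonAux

namespace UpsilonAux2
open Matrix UpsilonAux

variable {K : Type*} [Field K] [CharZero K]

lemma exists_denom (n : Submodule ℤ K) (hn2 : Submodule.span ℚ (n : Set K) = ⊤) (x : K) :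
    ∃ k : ℤ, k ≠ 0 ∧ (k : K) * x ∈ n := by
  have hx : x ∈ Submodule.span ℚ (n : Set K) := hn2 ▸ Submodule.mem_top
  induction hx using Submodule.span_induction with
  | mem y hy => exact ⟨1, one_ne_zero, by simpa using hy⟩
  | zero => exact ⟨1, one_ne_zero, by simp⟩
  | add y z hy' hz' ihy ihz =>
    obtain ⟨k, hk, hky⟩ := ihy
    obtain ⟨l, hl, hlz⟩ := ihz
    refine ⟨k * l, mul_ne_zero hk hl, ?_⟩
    have h1 : ((k * l : ℤ) : K) * (y + z) = l • ((k : K) * y) + k • ((l : K) * z) := by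
      simp only [zsmul_eq_mul]; push_cast; ring
    rw [h1]
    exact n.add_mem (n.smul_mem l hky) (n.smul_mem k hlz)
  | smul q y hy' ih =>
    obtain ⟨k, hk, hky⟩ := ih
    rcases eq_or_ne q 0 with rfl | hq
    · exact ⟨1, one_ne_zero, by simp⟩
    · refine ⟨(q.den : ℤ) * k, mul_ne_zero (by exact_mod_cast q.den_nz) hk, ?_⟩
      have h2 : (((q.den : ℤ) * k : ℤ) : K) * (q • y) = q.num • ((k : K) * y) := by
        simp only [zsmul_eq_mul, Rat.smul_def]
        push_cast
        have h3 : ((q.den : K)) * (q : K) = (q.num : K) := by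
          have : ((q.den : ℚ)) * q = (q.num : ℚ) := by
            field_simp
            exact Rat.den_mul_eq_num q
          exact_mod_cast congrArg (fun r : ℚ => (r : K)) this
        rw [show ((q.den : K)) * (k : K) * ((q:K) * y) = ((q.den:K) * (q:K)) * ((k:K)*y) by ring, h3]
      rw [h2]
      exact n.smul_mem _ hky

lemma exists_N (m n : Submodule ℤ K) (hm1 : m.FG)
    (hn2 : Submodule.span ℚ (n : Set K) = ⊤) :
    ∃ N : ℤ, N ≠ 0 ∧ ∀ x ∈ m, (N : K) * x ∈ n := by
  obtain ⟨s, hs⟩ := hm1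
  choose k hk hk2 using fun x : {y // y ∈ s} => exists_denom n hn2 x.1
  refine ⟨∏ x ∈ s.attach, k x, Finset.prod_ne_zero_iff.2 fun x _ => hk x, ?_⟩
  intro x hx
  rw [← hs] at hx
  induction hx using Submodule.span_induction with
  | mem y hy =>
    obtain ⟨c, hc⟩ := Finset.dvd_prod_of_mem k (Finset.mem_attach s ⟨y, hy⟩)
    rw [hc]
    have h1 : ((k ⟨y, hy⟩ * c : ℤ) : K) * y = c • ((k ⟨y, hy⟩ : K) * y) := by
      simp only [zsmul_eq_mul]; push_cast; ring
    rw [h1]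
    exact n.smul_mem _ (hk2 _)
  | zero => simp
  | add y z hy' hz' ihy ihz => rw [mul_add]; exact n.add_mem ihy ihz
  | smul a y hy' ih =>
    have h1 : ((∏ x ∈ s.attach, k x : ℤ) : K) * (a • y) =
        a • (((∏ x ∈ s.attach, k x : ℤ) : K) * y) := by
      simp only [zsmul_eq_mul]; ring
    rw [h1]
    exact n.smul_mem _ ih

end UpsilonAux2

namespace UpsilonAux3
open Matrix UpsilonAux UpsilonAux2

variable {K : Type*} [Field K] [CharZero K]

lemma Tel_mem_all (m n : Submodule ℤ K) (N : ℤ) (hN : N ≠ 0)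
    (hNmn : ∀ x ∈ m, (N : K) * x ∈ n) (t : K) :
    Tel t ∈ Subgroup.closure (upsilonGen K m n) := by
  have hNK : (N : K) ≠ 0 := Int.cast_ne_zero.2 hN
  have hneg : ∀ x ∈ m, (-(N : K)) * x ∈ n := fun x hx => by
    have h := n.neg_mem (hNmn x hx); rwa [← neg_mul] at h
  set a : K := (t / N + 1) / 2 with ha_def
  set b : K := (t / N - 1) / 2 with hb_def
  have key : t = a ^ 2 * (N : K) + b ^ 2 * (-(N : K)) := by
    rw [ha_def, hb_def]
    field_simp
    ring
  rcases eq_or_ne a 0 with ha | ha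
  · have h := ha_def ▸ ha
    field_simp at h
    have ht : t = -(N : K) := by linear_combination h
    rw [ht]
    exact Tel_mem m n _ hneg
  rcases eq_or_ne b 0 with hb | hb
  · have h := hb_def ▸ hb
    field_simp at h
    have ht : t = (N : K) := by linear_combination h
    rw [ht]
    exact Tel_mem m n _ hNmn
  · rw [key, ← Tel_mul]
    exact mul_mem (Tel_sq_mem m n a (N : K) ha hNmn) (Tel_sq_mem m n b (-(N : K)) hb hneg)

/-- Any nonzero vector can be sent to a multiple of `![1, 0]`. -/
lemma reduce (m n : Submodule ℤ K) (N : ℤ) (hN : N ≠ 0)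
    (hNmn : ∀ x ∈ m, (N : K) * x ∈ n) (v : Fin 2 → K) (hv : v ≠ 0) :
    ∃ g ∈ Subgroup.closure (upsilonGen K m n),
      ∃ c : K, c ≠ 0 ∧ Matrix.mulVec g.1 v = c • ![1, 0] := by
  rcases eq_or_ne (v 1) 0 with h1 | h1
  · have h0 : v 0 ≠ 0 := by
      intro h
      apply hv
      funext i; fin_cases i <;> simp [h, h1]
    refine ⟨1, one_mem _, v 0, h0, ?_⟩
    funext i
    fin_cases i <;>
      simp [Matrix.mulVec, dotProduct, Fin.sum_univ_two, h1]
  · refine ⟨Sel * Tel (-(v 0) / v 1),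
      mul_mem (Sel_mem m n) (Tel_mem_all m n N hN hNmn _), -(v 1), neg_ne_zero.2 h1, ?_⟩
    funext i
    fin_cases i
    · rw [Matrix.SpecialLinearGroup.coe_mul]; simp [Sel, Tel, Matrix.mulVec, dotProduct, Fin.sum_univ_two, Matrix.mul_fin_two]
    · rw [Matrix.SpecialLinearGroup.coe_mul]; simp [Sel, Tel, Matrix.mulVec, dotProduct, Fin.sum_univ_two, Matrix.mul_fin_two]
      field_simp
      ring

end UpsilonAux3

/-- The subgroup `Υ(m,n)` of `SL₂(K)` generated by `upsilonGen` acts transitively on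
`ℙ¹(K)` by Möbius transformations: for any two nonzero vectors `v, w ∈ K²` there is
`g ∈ Υ(m,n)` sending the line through `v` to the line through `w`. -/
theorem upsilon_transitive (K : Type*) [Field K] [NumberField K]
    (m n : Submodule ℤ K) (hm : IsFullLattice K m) (hn : IsFullLattice K n) :
    ∀ v w : Fin 2 → K, v ≠ 0 → w ≠ 0 →
      ∃ g ∈ Subgroup.closure (upsilonGen K m n),
        ∃ c : K, c ≠ 0 ∧ Matrix.mulVec g.1 v = c • w := by
  intro v w hv hw
  obtain ⟨N, hN, hNmn⟩ := UpsilonAux2.exists_N m n hm.1 hn.2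
  obtain ⟨gv, hgv, cv, hcv, hgvv⟩ := UpsilonAux3.reduce m n N hN hNmn v hv
  obtain ⟨gw, hgw, cw, hcw, hgww⟩ := UpsilonAux3.reduce m n N hN hNmn w hw
  refine ⟨gw⁻¹ * gv, mul_mem (inv_mem hgw) hgv, cv * cw⁻¹,
    mul_ne_zero hcv (inv_ne_zero hcw), ?_⟩
  have h1 : Matrix.mulVec (gw⁻¹).1 (cw • ![(1 : K), 0]) = w := by
    rw [← hgww, Matrix.mulVec_mulVec, ← Matrix.SpecialLinearGroup.coe_mul, inv_mul_cancel,
      Matrix.SpecialLinearGroup.coe_one, Matrix.one_mulVec]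
  have h2 : Matrix.mulVec (gw⁻¹).1 ![(1 : K), 0] = cw⁻¹ • w := by
    rw [eq_comm, inv_smul_eq_iff₀ hcw, ← Matrix.mulVec_smul]
    exact h1.symm
  calc Matrix.mulVec ((gw⁻¹ * gv).1) v
      = Matrix.mulVec (gw⁻¹).1 (Matrix.mulVec gv.1 v) := by
        rw [Matrix.SpecialLinearGroup.coe_mul, Matrix.mulVec_mulVec]
    _ = (cv * cw⁻¹) • w := by
        rw [hgvv, Matrix.mulVec_smul, h2, smul_smul]
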